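/- Let n ≥ 1, s ∈ {0,1}^n, and e_a ∈ {0,1} for a ∈ {0,1}^n fixed bits. After applying the Hadamard transform to all n+1 qubits of the state (1/√(2^n)) Σ_{a ∈ {0,1}^n} |a⟩|a·s + e_a mod 2⟩ and measuring, the probability that the outcome is (s, 1) equals (1/2^{2n+1}) · (Σ_{a ∈ {0,1}^n} (−1)^{e_a})². -/

import Mathlib

/-- After applying the Hadamard transform to all `n+1` qubits of the state
`(1/√(2^n)) Σ_{a ∈ {0,1}^n} |a⟩|a·s + e_a (mod 2)⟩` and measuring, the
probability that the outcome is `(s, 1)` equals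
`(1/2^{2n+1}) (Σ_a (−1)^{e_a})²`. -/
theorem stmt11 (n : ℕ) (hn : 1 ≤ n) (s : Fin n → ZMod 2)
    (e : (Fin n → ZMod 2) → ZMod 2) :
    ((1 / Real.sqrt (2 ^ n)) * (1 / Real.sqrt 2) ^ (n + 1) *
        ∑ a : Fin n → ZMod 2,
          (-1 : ℝ) ^ ((∑ i, a i * s i) + ((∑ i, a i * s i) + e a) * 1).val) ^ 2
      = (1 / 2 ^ (2 * n + 1)) *
          (∑ a : Fin n → ZMod 2, (-1 : ℝ) ^ (e a).val) ^ 2 := by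
  have hsum : ∀ a : Fin n → ZMod 2,
      ((∑ i, a i * s i) + ((∑ i, a i * s i) + e a) * 1) = e a := by
    intro a
    have : (2 : ZMod 2) = 0 := by decide
    ring_nf
    rw [this]; ring
  simp only [hsum]
  rw [mul_pow, mul_pow]
  have h2 : Real.sqrt 2 ^ 2 = 2 := Real.sq_sqrt (by norm_num)
  have hn2 : Real.sqrt (2 ^ n) ^ 2 = 2 ^ n := Real.sq_sqrt (by positivity)
  rw [div_pow, div_pow, one_pow, hn2, div_pow, one_pow, ← pow_mul]
  rw [show (n + 1) * 2 = 2 * (n + 1) by ring, pow_mul, h2, show n + 1 = 1 + n by ring, pow_add, pow_add]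
  field_simp
  ring
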